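/- Given any set X, any binomial ring A, and any map of sets φ : X → A, there is a unique extension of φ to a morphism of binomial rings φ̃ : Int(ℤ^X) → A (i.e., a ring homomorphism commuting with all the operations ζ_n). -/

import Mathlib

/-- The ring `Int(ℤ^X)` of integer-valued polynomials in variables from `X`:
the subring of `ℚ[X]` of polynomials taking integer values on every
integer point `a : X → ℤ`. -/
noncomputable def intPoly (X : Type*) : Subring (MvPolynomial X ℚ) where
  carrier := {q | ∀ a : X → ℤ, ∃ z : ℤ,
    MvPolynomial.eval (fun i => (a i : ℚ)) q = (z : ℚ)}
  zero_mem' := by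
    intro a
    exact ⟨0, by simp⟩
  one_mem' := by
    intro a
    exact ⟨1, by simp⟩
  add_mem' := by
    intro p q hp hq a
    obtain ⟨zp, hzp⟩ := hp a
    obtain ⟨zq, hzq⟩ := hq a
    exact ⟨zp + zq, by simp [hzp, hzq]⟩
  neg_mem' := by
    intro p hp a
    obtain ⟨z, hz⟩ := hp a
    exact ⟨-z, by simp [hz]⟩
  mul_mem' := by
    intro p q hp hq a
    obtain ⟨zp, hzp⟩ := hp a
    obtain ⟨zq, hzq⟩ := hq a
    exact ⟨zp * zq, by simp [hzp, hzq]⟩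

/-- The variable `x ∈ X`, as an element of `Int(ℤ^X)`. -/
noncomputable def intPolyX (X : Type*) (x : X) : intPoly X :=
  ⟨MvPolynomial.X x, fun a => ⟨a x, by simp⟩⟩


open MvPolynomial in
/-- The binomial-coefficient polynomial `C(X x, n)` in `ℚ[X]`. -/
noncomputable def bpoly {X : Type*} (x : X) (n : ℕ) : MvPolynomial X ℚ :=
  (n.factorial : ℚ)⁻¹ • Polynomial.aeval (MvPolynomial.X x) (descPochhammer ℚ n)

lemma factorial_smul_bpoly {X : Type*} (x : X) (n : ℕ) :
    (n.factorial : ℚ) • bpoly x n = Polynomial.aeval (MvPolynomial.X x) (descPochhammer ℚ n) := by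
  rw [bpoly, smul_smul, mul_inv_cancel₀ (by exact_mod_cast n.factorial_ne_zero), one_smul]

lemma bpoly_zero {X : Type*} (x : X) : bpoly x 0 = 1 := by
  simp [bpoly]

lemma bpoly_succ {X : Type*} (x : X) (k : ℕ) :
    ((k+1 : ℕ) : ℚ) • bpoly x (k+1) =
      bpoly x k * (MvPolynomial.X x - (k : MvPolynomial X ℚ)) := by
  rw [bpoly, bpoly, descPochhammer_succ_right, map_mul, smul_smul, smul_mul_assoc]
  congr 1
  · congr 1
    rw [Nat.factorial_succ]
    push_cast
    rw [mul_inv]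
    field_simp
  · simp

lemma X_mul_bpoly {X : Type*} (x : X) (k : ℕ) :
    MvPolynomial.X x * bpoly x k =
      ((k+1 : ℕ) : ℚ) • bpoly x (k+1) + ((k : ℕ) : ℚ) • bpoly x k := by
  rw [bpoly_succ, MvPolynomial.smul_eq_C_mul, MvPolynomial.C_eq_coe_nat]
  ring

-- eval of a smul
lemma eval_smul' {X : Type*} (f : X → ℚ) (r : ℚ) (p : MvPolynomial X ℚ) :
    MvPolynomial.eval f (r • p) = r * MvPolynomial.eval f p := by
  rw [MvPolynomial.smul_eq_C_mul, map_mul, MvPolynomial.eval_C]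

lemma eval_bpoly {X : Type*} (a : X → ℤ) (x : X) (n : ℕ) :
    MvPolynomial.eval (fun i => ((a i : ℤ) : ℚ)) (bpoly x n) = ((Ring.choose (a x) n : ℤ) : ℚ) := by
  set E := MvPolynomial.eval (fun i => ((a i : ℤ) : ℚ)) with hE
  have h1 : (n.factorial : ℚ) * E (bpoly x n) = E ((n.factorial : ℚ) • bpoly x n) := by
    rw [eval_smul']
  rw [factorial_smul_bpoly] at h1
  have h2 : E (Polynomial.aeval (MvPolynomial.X x) (descPochhammer ℚ n)) =
      (descPochhammer ℚ n).eval ((a x : ℤ) : ℚ) := by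
    rw [Polynomial.aeval_def, Polynomial.hom_eval₂]
    have hcomp : (E : MvPolynomial X ℚ →+* ℚ).comp (algebraMap ℚ (MvPolynomial X ℚ)) =
        RingHom.id ℚ := by
      ext r
      simp [hE]
    rw [hcomp]
    rw [show E (MvPolynomial.X x) = ((a x : ℤ) : ℚ) from by simp [hE]]
    rfl
  have h3 : (descPochhammer ℚ n).eval ((a x : ℤ) : ℚ) =
      (((descPochhammer ℤ n).eval (a x) : ℤ) : ℚ) := by
    rw [descPochhammer_eval_cast]
  have h4 : (descPochhammer ℤ n).eval (a x) = n.factorial • Ring.choose (a x) n := by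
    rw [Polynomial.eval_eq_smeval, Ring.descPochhammer_eq_factorial_smul_choose]
  have : (n.factorial : ℚ) * E (bpoly x n) =
      (n.factorial : ℚ) * ((Ring.choose (a x) n : ℤ) : ℚ) := by
    rw [h1, h2, h3, h4]
    push_cast
    ring_nf
    push_cast
    ring
  have hfac : (n.factorial : ℚ) ≠ 0 := by exact_mod_cast n.factorial_ne_zero
  exact mul_left_cancel₀ hfac this

noncomputable def Pb {X : Type*} (n : X →₀ ℕ) : MvPolynomial X ℚ :=
  ∏ x ∈ n.support, bpoly x (n x)

lemma Pb_zero {X : Type*} : Pb (0 : X →₀ ℕ) = 1 := by simp [Pb]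

lemma Pb_eq_mul {X : Type*} [DecidableEq X] (x : X) (n : X →₀ ℕ) :
    Pb n = bpoly x (n x) * ∏ y ∈ n.support.erase x, bpoly y (n y) := by
  by_cases hx : x ∈ n.support
  · exact (Finset.mul_prod_erase _ _ hx).symm
  · rw [Finsupp.notMem_support_iff.mp hx, bpoly_zero, one_mul, Finset.erase_eq_of_notMem hx, Pb]

lemma X_mul_Pb {X : Type*} [DecidableEq X] (x : X) (n : X →₀ ℕ) :
    MvPolynomial.X x * Pb n =
      ((n x + 1 : ℕ) : ℚ) • Pb (n + Finsupp.single x 1) + ((n x : ℕ) : ℚ) • Pb n := by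
  have hval : ((n + Finsupp.single x 1 : X →₀ ℕ)) x = n x + 1 := by simp
  have herase : (n + Finsupp.single x 1).support.erase x = n.support.erase x := by
    ext y
    simp only [Finset.mem_erase, Finsupp.mem_support_iff, Finsupp.add_apply]
    constructor
    · rintro ⟨hy, h⟩
      refine ⟨hy, ?_⟩
      rwa [Finsupp.single_apply, if_neg (fun h' => hy h'.symm), add_zero] at h
    · rintro ⟨hy, h⟩
      refine ⟨hy, ?_⟩
      rwa [Finsupp.single_apply, if_neg (fun h' => hy h'.symm), add_zero]
  have hcong : ∏ y ∈ (n + Finsupp.single x 1).support.erase x,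
      bpoly y (((n + Finsupp.single x 1 : X →₀ ℕ)) y) = ∏ y ∈ n.support.erase x, bpoly y (n y) := by
    rw [herase]
    refine Finset.prod_congr rfl fun y hy => ?_
    have hyx : y ≠ x := (Finset.mem_erase.mp hy).1
    rw [Finsupp.add_apply, Finsupp.single_apply, if_neg (fun h' => hyx h'.symm), add_zero]
  rw [Pb_eq_mul x n, Pb_eq_mul x (n + Finsupp.single x 1), hcong, hval, ← mul_assoc,
    X_mul_bpoly, add_mul, smul_mul_assoc, smul_mul_assoc]

lemma span_Pb_top {X : Type*} :
    Submodule.span ℚ (Set.range (Pb (X := X))) = ⊤ := by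
  classical
  rw [eq_top_iff]
  intro p _
  induction p using MvPolynomial.induction_on with
  | C a =>
    have : (MvPolynomial.C a : MvPolynomial X ℚ) = a • Pb 0 := by
      rw [Pb_zero, MvPolynomial.smul_eq_C_mul, mul_one]
    rw [this]
    exact Submodule.smul_mem _ a (Submodule.subset_span ⟨0, rfl⟩)
  | add p q hp hq => exact Submodule.add_mem _ (hp trivial) (hq trivial)
  | mul_X p x hp =>
    refine Submodule.span_induction (p := fun r _ => r * MvPolynomial.X x ∈
        Submodule.span ℚ (Set.range (Pb (X := X)))) ?_ ?_ ?_ ?_ (hp trivial)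
    · rintro r ⟨m, rfl⟩
      rw [mul_comm, X_mul_Pb]
      exact Submodule.add_mem _
        (Submodule.smul_mem _ _ (Submodule.subset_span ⟨m + Finsupp.single x 1, rfl⟩))
        (Submodule.smul_mem _ _ (Submodule.subset_span ⟨m, rfl⟩))
    · show (0 : MvPolynomial X ℚ) * MvPolynomial.X x ∈ _
      rw [zero_mul]; exact Submodule.zero_mem _
    · intro a b _ _ ha hb
      show (a + b) * MvPolynomial.X x ∈ _
      rw [add_mul]; exact Submodule.add_mem _ ha hb
    · intro r a _ ha
      show (r • a) * MvPolynomial.X x ∈ _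
      rw [smul_mul_assoc]; exact Submodule.smul_mem _ _ ha

lemma eval_Pb_nat {X : Type*} (m n : X →₀ ℕ) :
    MvPolynomial.eval (fun i => (((m i : ℤ)) : ℚ)) (Pb n) =
      ((∏ x ∈ n.support, Nat.choose (m x) (n x) : ℕ) : ℚ) := by
  rw [Pb, map_prod, Nat.cast_prod]
  refine Finset.prod_congr rfl fun x _ => ?_
  rw [eval_bpoly (fun i => (m i : ℤ)) x (n x)]
  have h : Ring.choose ((m x : ℤ)) (n x) = ((m x).choose (n x) : ℤ) := by
    exact_mod_cast Ring.choose_natCast (R := ℤ) (m x) (n x)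
  rw [h]
  push_cast
  rfl

/-- degree of a finsupp -/
def fdeg {X : Type*} (n : X →₀ ℕ) : ℕ := n.sum fun _ k => k

lemma fdeg_lt {X : Type*} {m n : X →₀ ℕ} (hle : ∀ x, m x ≤ n x) (hne : m ≠ n) :
    fdeg m < fdeg n := by
  have hsub : m.support ⊆ n.support := by
    intro x hx
    rw [Finsupp.mem_support_iff] at hx ⊢
    exact fun h => hx (Nat.le_antisymm (h ▸ hle x) (Nat.zero_le _))
  have h1 : fdeg m = ∑ x ∈ n.support, m x :=
    Finsupp.sum_of_support_subset _ hsub _ (fun _ _ => rfl)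
  have h2 : fdeg n = ∑ x ∈ n.support, n x := rfl
  rw [h1, h2]
  obtain ⟨x, hx⟩ : ∃ x, m x ≠ n x := by
    by_contra h
    push_neg at h
    exact hne (Finsupp.ext h)
  have hxlt : m x < n x := lt_of_le_of_ne (hle x) hx
  refine Finset.sum_lt_sum (fun i _ => hle i) ⟨x, ?_, hxlt⟩
  rw [Finsupp.mem_support_iff]
  omega

lemma coeffs_int {X : Type*} (c : (X →₀ ℕ) →₀ ℚ)
    (hc : ∀ a : X → ℤ, ∃ z : ℤ,
      MvPolynomial.eval (fun i => ((a i : ℤ) : ℚ)) (c.sum fun n r => r • Pb n) = (z : ℚ)) :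
    ∀ n, ∃ z : ℤ, c n = (z : ℚ) := by
  classical
  have key : ∀ d : ℕ, ∀ n, fdeg n < d → ∃ z : ℤ, c n = (z : ℚ) := by
    intro d
    induction d with
    | zero => exact fun n hn => absurd hn (by omega)
    | succ d ih =>
      intro n hn
      by_cases hns : n ∈ c.support
      · obtain ⟨z, hz⟩ := hc (fun y => (n y : ℤ))
        set E := MvPolynomial.eval (fun i : X => ((n i : ℤ) : ℚ)) with hE
        have hsum : E (c.sum fun m r => r • Pb m) =
            ∑ m ∈ c.support, c m * ((∏ x ∈ m.support, Nat.choose (n x) (m x) : ℕ) : ℚ) := by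
          rw [Finsupp.sum, map_sum]
          refine Finset.sum_congr rfl fun m _ => ?_
          rw [eval_smul', eval_Pb_nat]
        have hself : ((∏ x ∈ n.support, Nat.choose (n x) (n x) : ℕ) : ℚ) = 1 := by
          norm_cast
          exact Finset.prod_eq_one fun x _ => Nat.choose_self _
        -- c n = z - rest
        have hsplit : c n + ∑ m ∈ c.support.erase n,
            c m * ((∏ x ∈ m.support, Nat.choose (n x) (m x) : ℕ) : ℚ) = (z : ℚ) := by
          rw [← hz, hsum, ← Finset.add_sum_erase _ _ hns, hself, mul_one]
        have hrest : ∃ w : ℤ, ∑ m ∈ c.support.erase n,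
            c m * ((∏ x ∈ m.support, Nat.choose (n x) (m x) : ℕ) : ℚ) = (w : ℚ) := by
          have : ∀ m ∈ c.support.erase n, ∃ w : ℤ,
              c m * ((∏ x ∈ m.support, Nat.choose (n x) (m x) : ℕ) : ℚ) = (w : ℚ) := by
            intro m hm
            obtain ⟨hmn, hms⟩ := Finset.mem_erase.mp hm
            by_cases hle : ∀ x, m x ≤ n x
            · obtain ⟨w, hw⟩ := ih m (by have := fdeg_lt hle hmn; omega)
              exact ⟨w * (∏ x ∈ m.support, Nat.choose (n x) (m x) : ℕ), by push_cast [hw]; ring⟩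
            · push_neg at hle
              obtain ⟨x, hx⟩ := hle
              have hxs : x ∈ m.support := by
                rw [Finsupp.mem_support_iff]; omega
              have : (∏ x ∈ m.support, Nat.choose (n x) (m x) : ℕ) = 0 :=
                Finset.prod_eq_zero hxs (Nat.choose_eq_zero_of_lt hx)
              exact ⟨0, by rw [this]; push_cast; ring⟩
          choose w hw using this
          refine ⟨∑ m ∈ (c.support.erase n).attach, w m m.2, ?_⟩
          rw [← Finset.sum_attach (c.support.erase n)
            (fun m => c m * ((∏ x ∈ m.support, Nat.choose (n x) (m x) : ℕ) : ℚ))]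
          rw [Int.cast_sum]
          exact Finset.sum_congr rfl fun m _ => hw m m.2
        obtain ⟨w, hw⟩ := hrest
        refine ⟨z - w, ?_⟩
        push_cast
        linarith [hsplit, hw]
      · exact ⟨0, by rw [Finsupp.notMem_support_iff.mp hns, Int.cast_zero]⟩
  exact fun n => key (fdeg n + 1) n (by omega)

/-- the generating set -/
def Sgen (X : Type*) : Set (MvPolynomial X ℚ) := Set.range fun p : X × ℕ => bpoly p.1 p.2

lemma Pb_mem_closure {X : Type*} (n : X →₀ ℕ) : Pb n ∈ Subring.closure (Sgen X) :=
  Subring.prod_mem _ fun x _ => Subring.subset_closure ⟨(x, n x), rfl⟩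

lemma mem_closure_of_intValued {X : Type*} (q : MvPolynomial X ℚ)
    (hq : ∀ a : X → ℤ, ∃ z : ℤ,
      MvPolynomial.eval (fun i => ((a i : ℤ) : ℚ)) q = (z : ℚ)) :
    q ∈ Subring.closure (Sgen X) := by
  have hq' : q ∈ Submodule.span ℚ (Set.range (Pb (X := X))) := by
    rw [span_Pb_top]; trivial
  obtain ⟨c, hc⟩ := Finsupp.mem_span_range_iff_exists_finsupp.mp hq'
  have hints := coeffs_int c (by rw [hc]; exact hq)
  rw [← hc, Finsupp.sum]
  refine Subring.sum_mem _ fun m _ => ?_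
  obtain ⟨z, hz⟩ := hints m
  rw [hz, Int.cast_smul_eq_zsmul]
  exact Subring.zsmul_mem _ (Pb_mem_closure m) z

/- general lemmas -/
lemma descPoch_eval_hom {A B : Type*} [CommRing A] [CommRing B] (f : A →+* B) (n : ℕ) (a : A) :
    (descPochhammer B n).eval (f a) = f ((descPochhammer A n).eval a) := by
  rw [← descPochhammer_map f, Polynomial.eval_map, Polynomial.eval₂_hom]

lemma descPoch_eval_eq_factorial_smul {A : Type*} [CommRing A] [BinomialRing A] (b : A) (n : ℕ) :
    (descPochhammer A n).eval b = n.factorial • Ring.choose b n := by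
  rw [← Ring.descPochhammer_eq_factorial_smul_choose, ← Polynomial.aeval_eq_smeval,
    Polynomial.aeval_def, ← Polynomial.eval_map, descPochhammer_map]

lemma qsmul_cancel {M : Type*} [AddCommMonoid M] [Module ℚ M] {c : ℚ} (hc : c ≠ 0) {u v : M}
    (h : c • u = c • v) : u = v := by
  have := congrArg (c⁻¹ • ·) h
  simpa [smul_smul, inv_mul_cancel₀ hc] using this

lemma bpoly_mem {X : Type*} (x : X) (n : ℕ) : bpoly x n ∈ intPoly X :=
  fun a => ⟨Ring.choose (a x) n, eval_bpoly a x n⟩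

noncomputable def Bc {X : Type*} (x : X) (n : ℕ) : intPoly X := ⟨bpoly x n, bpoly_mem x n⟩

lemma aeval_descPoch {X : Type*} (x : X) (n : ℕ) :
    Polynomial.aeval (MvPolynomial.X x) (descPochhammer ℚ n) =
      (descPochhammer (MvPolynomial X ℚ) n).eval (MvPolynomial.X x) := by
  rw [Polynomial.aeval_def, ← Polynomial.eval_map, descPochhammer_map]

lemma Bc_spec {X : Type*} (x : X) (n : ℕ) :
    n.factorial • Bc x n = (descPochhammer (intPoly X) n).eval (intPolyX X x) := by
  apply Subtype.ext
  have h1 : ((n.factorial • Bc x n : intPoly X) : MvPolynomial X ℚ) =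
      n.factorial • (bpoly x n) := by
    push_cast
    rfl
  have h2 : (((descPochhammer (intPoly X) n).eval (intPolyX X x) : intPoly X) :
      MvPolynomial X ℚ) = (descPochhammer (MvPolynomial X ℚ) n).eval (MvPolynomial.X x) := by
    have := descPoch_eval_hom (intPoly X).subtype n (intPolyX X x)
    exact this.symm
  rw [h1, h2, ← aeval_descPoch, ← factorial_smul_bpoly, Nat.cast_smul_eq_nsmul]


set_option maxHeartbeats 1000000 in
/-- Given any set `X`, any binomial ring `A`, and any map of sets `φ : X → A`,
there is a unique extension of `φ` to a morphism of binomial rings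
`φ̃ : Int(ℤ^X) → A`, i.e. a ring homomorphism commuting with all the binomial
operations `ζ_n` (on `Int(ℤ^X)`, the element `ζ_n(q)` is the unique `s` with
`n! • s = q(q−1)⋯(q−n+1)`; on `A` it is `Ring.choose · n`). -/
theorem stmt_7 (X : Type*) (A : Type*) [CommRing A] [BinomialRing A] (φ : X → A) :
    ∃! f : intPoly X →+* A,
      (∀ x : X, f (intPolyX X x) = φ x) ∧
      (∀ (q s : intPoly X) (n : ℕ),
        n.factorial • s = (descPochhammer (intPoly X) n).eval q →
        f s = Ring.choose (f q) n) := by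
  classical
  -- the rationalization of A
  letI Aq := TensorProduct ℤ ℚ A
  let ι : A →+* Aq := (Algebra.TensorProduct.includeRight : A →ₐ[ℤ] Aq).toRingHom
  -- injectivity of ι
  have hloc : IsLocalizedModule (nonZeroDivisors ℤ) (TensorProduct.mk ℤ ℚ A 1) :=
    (isLocalizedModule_iff_isBaseChange (nonZeroDivisors ℤ) ℚ _).mpr
      (TensorProduct.isBaseChange ℤ A ℚ)
  have hι : Function.Injective ι := by
    rw [injective_iff_map_eq_zero]
    intro a ha
    have h0 : (TensorProduct.mk ℤ ℚ A 1) a = 0 := ha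
    obtain ⟨s, hs⟩ :=
      (IsLocalizedModule.eq_zero_iff (nonZeroDivisors ℤ) (TensorProduct.mk ℤ ℚ A 1)).mp h0
    have hsne : (s : ℤ) ≠ 0 := nonZeroDivisors.coe_ne_zero s
    have hnat : (s : ℤ).natAbs ≠ 0 := Int.natAbs_ne_zero.mpr hsne
    have h2 : (s : ℤ).natAbs • a = 0 := by
      rcases Int.natAbs_eq (s : ℤ) with h | h
      · have : ((s : ℤ).natAbs : ℤ) • a = 0 := by rw [← h]; exact hs
        rwa [natCast_zsmul] at this
      · have : -(((s : ℤ).natAbs : ℤ)) • a = 0 := by rw [← h]; exact hs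
        rw [neg_zsmul, neg_eq_zero, natCast_zsmul] at this
        exact this
    exact (haveI := BinomialRing.toIsAddTorsionFree (R := A); nsmul_right_injective hnat) (by simpa using h2)
  -- the rational evaluation map
  let g : MvPolynomial X ℚ →ₐ[ℚ] Aq :=
    MvPolynomial.aeval (fun x : X => ((1 : ℚ) ⊗ₜ[ℤ] φ x : Aq))
  have hgX : ∀ x : X, g (MvPolynomial.X x) = ι (φ x) := fun x => by
    simp [g, ι]
  have hgen : ∀ (x : X) (n : ℕ), g (bpoly x n) = ι (Ring.choose (φ x) n) := by
    intro x n
    have hfac : ((n.factorial : ℚ)) ≠ 0 := by exact_mod_cast n.factorial_ne_zero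
    refine qsmul_cancel hfac ?_
    have h1 : (n.factorial : ℚ) • g (bpoly x n) = g ((n.factorial : ℚ) • bpoly x n) :=
      (map_smul g _ _).symm
    have h2 : g ((descPochhammer (MvPolynomial X ℚ) n).eval (MvPolynomial.X x)) =
        (descPochhammer Aq n).eval (g (MvPolynomial.X x)) :=
      (descPoch_eval_hom (g : MvPolynomial X ℚ →+* Aq) n (MvPolynomial.X x)).symm
    rw [h1, factorial_smul_bpoly, aeval_descPoch, h2, hgX x, descPoch_eval_hom ι n (φ x), descPoch_eval_eq_factorial_smul, map_nsmul,
      Nat.cast_smul_eq_nsmul]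
  -- every integer-valued polynomial maps into the image of A
  have hrange : ∀ q : intPoly X, g (q : MvPolynomial X ℚ) ∈ ι.range := by
    intro q
    have h1 : (q : MvPolynomial X ℚ) ∈ Subring.closure (Sgen X) :=
      mem_closure_of_intValued _ q.2
    have h2 : g (q : MvPolynomial X ℚ) ∈
        (Subring.closure (Sgen X)).map (g : MvPolynomial X ℚ →+* Aq) :=
      Subring.mem_map.mpr ⟨_, h1, rfl⟩
    rw [RingHom.map_closure] at h2
    refine Subring.closure_le.mpr ?_ h2
    rintro _ ⟨_, ⟨⟨x, n⟩, rfl⟩, rfl⟩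
    exact ⟨Ring.choose (φ x) n, (hgen x n).symm⟩
  have hex : ∀ q : intPoly X, ∃ a : A, ι a = g (q : MvPolynomial X ℚ) :=
    fun q => RingHom.mem_range.mp (hrange q)
  let f0 : intPoly X → A := fun q => (hex q).choose
  have hf0 : ∀ q : intPoly X, ι (f0 q) = g (q : MvPolynomial X ℚ) := fun q => (hex q).choose_spec
  let f : intPoly X →+* A :=
    { toFun := f0
      map_one' := hι (by rw [hf0, OneMemClass.coe_one, map_one, map_one])
      map_mul' := fun a b => hι (by
        rw [map_mul, hf0, hf0, hf0, MulMemClass.coe_mul, map_mul])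
      map_zero' := hι (by rw [hf0, ZeroMemClass.coe_zero, map_zero, map_zero])
      map_add' := fun a b => hι (by
        rw [map_add, hf0, hf0, hf0, AddMemClass.coe_add, map_add]) }
  have hfval : ∀ q : intPoly X, ι (f q) = g (q : MvPolynomial X ℚ) := hf0
  -- the two defining properties of f
  have hprop1 : ∀ x : X, f (intPolyX X x) = φ x := by
    intro x
    apply hι
    rw [hfval]
    exact hgX x
  have hprop2 : ∀ (q s : intPoly X) (n : ℕ),
      n.factorial • s = (descPochhammer (intPoly X) n).eval q →
      f s = Ring.choose (f q) n := by
    intro q s n hqs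
    refine (haveI := BinomialRing.toIsAddTorsionFree (R := A); nsmul_right_injective n.factorial_ne_zero) ?_
    show n.factorial • f s = n.factorial • Ring.choose (f q) n
    refine hι ?_
    have hco : ((n.factorial • s : intPoly X) : MvPolynomial X ℚ) =
        n.factorial • (s : MvPolynomial X ℚ) := by push_cast; rfl
    have hco2 : (((descPochhammer (intPoly X) n).eval q : intPoly X) : MvPolynomial X ℚ) =
        (descPochhammer (MvPolynomial X ℚ) n).eval (q : MvPolynomial X ℚ) :=
      (descPoch_eval_hom (intPoly X).subtype n q).symm
    have h4 : g ((descPochhammer (MvPolynomial X ℚ) n).eval (q : MvPolynomial X ℚ)) =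
        (descPochhammer Aq n).eval (g (q : MvPolynomial X ℚ)) :=
      (descPoch_eval_hom (g : MvPolynomial X ℚ →+* Aq) n _).symm
    rw [map_nsmul, map_nsmul, hfval s, ← map_nsmul g n.factorial (s : MvPolynomial X ℚ), ← hco, hqs,
      hco2, h4, ← hfval q, descPoch_eval_hom ι n (f q), descPoch_eval_eq_factorial_smul,
      map_nsmul]
  refine ⟨f, ⟨hprop1, hprop2⟩, ?_⟩
  -- uniqueness
  rintro f' ⟨h1', h2'⟩
  have hSclos : Subring.closure (Set.range fun p : X × ℕ => Bc (X := X) p.1 p.2) = ⊤ := by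
    rw [eq_top_iff]
    intro r _
    have hr : (r : MvPolynomial X ℚ) ∈ Subring.closure (Sgen X) :=
      mem_closure_of_intValued _ r.2
    have himg : Subring.map (intPoly X).subtype
        (Subring.closure (Set.range fun p : X × ℕ => Bc (X := X) p.1 p.2)) =
        Subring.closure (Sgen X) := by
      rw [RingHom.map_closure]
      congr 1
      ext y
      constructor
      · rintro ⟨_, ⟨⟨x, n⟩, rfl⟩, rfl⟩
        exact ⟨(x, n), rfl⟩
      · rintro ⟨⟨x, n⟩, rfl⟩
        exact ⟨Bc x n, ⟨(x, n), rfl⟩, rfl⟩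
    rw [← himg] at hr
    obtain ⟨r', hr', hrr⟩ := Subring.mem_map.mp hr
    have : r' = r := Subtype.ext hrr
    rwa [← this]
  have heq : Subring.closure (Set.range fun p : X × ℕ => Bc (X := X) p.1 p.2) ≤
      RingHom.eqLocus f' f := by
    refine Subring.closure_le.mpr ?_
    rintro _ ⟨⟨x, n⟩, rfl⟩
    show f' (Bc x n) = f (Bc x n)
    rw [h2' (intPolyX X x) (Bc x n) n (Bc_spec x n),
      hprop2 (intPolyX X x) (Bc x n) n (Bc_spec x n), h1' x, hprop1 x]
  refine RingHom.ext fun q => ?_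
  have : q ∈ RingHom.eqLocus f' f := heq (hSclos ▸ Subring.mem_top q)
  exact this
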